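/- Suppose e = 2 (i.e. t = s) and 2n ≡ 1 (mod 3), and set i_max = (2n−1)/3. Then δ(i_max − 1) = δ(i_max); moreover δ is strictly increasing on {0, 1, …, i_max − 1} and strictly decreasing on {i_max, …, n−1}, so δ attains its maximum value at i_max as well as at i_max − 1. -/

import Mathlib

open Finset

/-- `t = s^(e/2)` as a real number. -/
noncomputable def tval (s e : ℕ) : ℝ := (s : ℝ) ^ ((e : ℝ) / 2)

/-- `δ(i) = |Δ_i|`, the number of `i`-dimensional singular subspaces of a finite
polar space of rank `n` with orders `(s, …, s, t)`, `t = s^(e/2)`. -/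
noncomputable def delta (n s e : ℕ) (i : ℤ) : ℝ :=
  (∏ u ∈ Finset.Icc (0:ℤ) i, ((s:ℝ) ^ ((n:ℤ) - u - 1) * tval s e + 1)) *
  (∏ u ∈ Finset.Icc (0:ℤ) i, ((s:ℝ) ^ ((n:ℤ) - u) - 1)) /
  (∏ u ∈ Finset.Icc (0:ℤ) i, ((s:ℝ) ^ (u + 1) - 1))

lemma tval_two (s : ℕ) : tval s 2 = (s:ℝ) := by
  simp [tval]

lemma Icc_insert_top (i : ℤ) (hi : 0 ≤ i) :
    Finset.Icc (0:ℤ) i = insert i (Finset.Icc 0 (i-1)) := by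
  ext x; simp only [Finset.mem_Icc, Finset.mem_insert]; omega

lemma delta_pos (n s : ℕ) (hs : 2 ≤ s) (i : ℤ) (hi : i ≤ (n:ℤ) - 1) :
    0 < delta n s 2 i := by
  have hs1 : (1:ℝ) < (s:ℝ) := by exact_mod_cast hs.trans_lt' one_lt_two
  have hs0 : (0:ℝ) < (s:ℝ) := lt_trans one_pos hs1
  unfold delta
  apply div_pos
  · apply mul_pos
    · refine Finset.prod_pos fun u hu => ?_
      rw [tval_two]
      positivity
    · refine Finset.prod_pos fun u hu => ?_
      rw [Finset.mem_Icc] at hu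
      have : (1:ℝ) < (s:ℝ) ^ ((n:ℤ) - u) :=
        one_lt_zpow₀ hs1 (by omega)
      linarith
  · refine Finset.prod_pos fun u hu => ?_
    rw [Finset.mem_Icc] at hu
    have : (1:ℝ) < (s:ℝ) ^ (u + 1) := one_lt_zpow₀ hs1 (by omega)
    linarith

lemma delta_step (n s : ℕ) (hs : 2 ≤ s) (i : ℤ) (hi : 0 ≤ i) :
    delta n s 2 i = delta n s 2 (i - 1) *
      (((s:ℝ) ^ (2 * ((n:ℤ) - i)) - 1) / ((s:ℝ) ^ (i + 1) - 1)) := by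
  have hs1 : (1:ℝ) < (s:ℝ) := by exact_mod_cast hs.trans_lt' one_lt_two
  have hs0 : (s:ℝ) ≠ 0 := by positivity
  have hmem : i ∉ Finset.Icc (0:ℤ) (i-1) := by simp
  have hden : ∀ j : ℤ, 0 ≤ j → ((s:ℝ) ^ (j + 1) - 1) ≠ 0 := fun j hj => by
    have : (1:ℝ) < (s:ℝ) ^ (j + 1) := one_lt_zpow₀ hs1 (by omega)
    linarith
  have hP3 : (∏ u ∈ Finset.Icc (0:ℤ) (i-1), ((s:ℝ) ^ (u + 1) - 1)) ≠ 0 := by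
    refine Finset.prod_ne_zero_iff.2 fun u hu => ?_
    rw [Finset.mem_Icc] at hu; exact hden u hu.1
  have hfac : ((s:ℝ) ^ ((n:ℤ) - i - 1) * tval s 2 + 1) * ((s:ℝ) ^ ((n:ℤ) - i) - 1)
      = (s:ℝ) ^ (2 * ((n:ℤ) - i)) - 1 := by
    rw [tval_two]
    have h1 : (s:ℝ) ^ ((n:ℤ) - i - 1) * (s:ℝ) = (s:ℝ) ^ ((n:ℤ) - i) := by
      rw [← zpow_add_one₀ hs0]; ring_nf
    have h2 : (s:ℝ) ^ (2 * ((n:ℤ) - i)) = (s:ℝ) ^ ((n:ℤ) - i) * (s:ℝ) ^ ((n:ℤ) - i) := by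
      rw [two_mul, zpow_add₀ hs0]
    rw [h1, h2]; ring
  unfold delta
  rw [Icc_insert_top i hi, Finset.prod_insert hmem, Finset.prod_insert hmem,
    Finset.prod_insert hmem]
  field_simp
  rw [← hfac]
  ring

theorem stmt_1 (n s e : ℕ) (hn : 3 ≤ n) (hs : 2 ≤ s) (he : e = 2)
    (hmod : (2 * (n:ℤ)) % 3 = 1)
    (imax : ℤ) (himax : imax = (2 * (n:ℤ) - 1) / 3) :
    delta n s e (imax - 1) = delta n s e imax ∧
    StrictMonoOn (delta n s e) (Set.Icc 0 (imax - 1)) ∧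
    StrictAntiOn (delta n s e) (Set.Icc imax ((n:ℤ) - 1)) ∧
    ∀ i ∈ Set.Icc (0:ℤ) ((n:ℤ) - 1), delta n s e i ≤ delta n s e imax := by
  subst he
  have hs1 : (1:ℝ) < (s:ℝ) := by exact_mod_cast hs.trans_lt' one_lt_two
  have h3imax : 3 * imax = 2 * (n:ℤ) - 1 := by omega
  have himax1 : 2 ≤ imax := by omega
  have himaxn : imax ≤ (n:ℤ) - 1 := by omega
  -- ratio facts
  have hdenpos : ∀ j : ℤ, 0 ≤ j → (0:ℝ) < (s:ℝ) ^ (j + 1) - 1 := fun j hj => by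
    have : (1:ℝ) < (s:ℝ) ^ (j + 1) := one_lt_zpow₀ hs1 (by omega)
    linarith
  -- strict increase step: for 0 ≤ j ≤ imax - 1, delta (j-1) < delta j
  have hstep_lt : ∀ j : ℤ, 0 ≤ j → j ≤ imax - 1 → delta n s 2 (j - 1) < delta n s 2 j := by
    intro j hj0 hj1
    rw [delta_step n s hs j hj0]
    have hpos := delta_pos n s hs (j-1) (by omega)
    have hd := hdenpos j hj0
    have hratio : (1:ℝ) < ((s:ℝ) ^ (2 * ((n:ℤ) - j)) - 1) / ((s:ℝ) ^ (j + 1) - 1) := by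
      rw [lt_div_iff₀ hd]
      have : (s:ℝ) ^ (j + 1) < (s:ℝ) ^ (2 * ((n:ℤ) - j)) :=
        zpow_lt_zpow_right₀ hs1 (by omega)
      linarith
    nlinarith
  -- equality step at j = imax
  have heq : delta n s 2 (imax - 1) = delta n s 2 imax := by
    rw [delta_step n s hs imax (by omega)]
    have : 2 * ((n:ℤ) - imax) = imax + 1 := by omega
    rw [this, div_self (by have := hdenpos imax (by omega); linarith)]
    ring
  -- strict decrease step: for imax + 1 ≤ j ≤ n - 1, delta j < delta (j-1)
  have hstep_gt : ∀ j : ℤ, imax + 1 ≤ j → j ≤ (n:ℤ) - 1 →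
      delta n s 2 j < delta n s 2 (j - 1) := by
    intro j hj0 hj1
    rw [delta_step n s hs j (by omega)]
    have hpos := delta_pos n s hs (j-1) (by omega)
    have hd := hdenpos j (by omega)
    have hratio : ((s:ℝ) ^ (2 * ((n:ℤ) - j)) - 1) / ((s:ℝ) ^ (j + 1) - 1) < 1 := by
      rw [div_lt_one hd]
      have : (s:ℝ) ^ (2 * ((n:ℤ) - j)) < (s:ℝ) ^ (j + 1) :=
        zpow_lt_zpow_right₀ hs1 (by omega)
      linarith
    have hratiopos : (0:ℝ) < ((s:ℝ) ^ (2 * ((n:ℤ) - j)) - 1) / ((s:ℝ) ^ (j + 1) - 1) := by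
      apply div_pos _ hd
      have : (1:ℝ) < (s:ℝ) ^ (2 * ((n:ℤ) - j)) := one_lt_zpow₀ hs1 (by omega)
      linarith
    nlinarith
  -- monotone on [0, imax-1]
  have hmono : ∀ a : ℤ, 0 ≤ a → ∀ b : ℤ, a + 1 ≤ b → b ≤ imax - 1 →
      delta n s 2 a < delta n s 2 b := by
    intro a ha b hb
    refine Int.le_induction
      (motive := fun b _ => b ≤ imax - 1 → delta n s 2 a < delta n s 2 b) ?_ ?_ b hb
    · intro h
      have := hstep_lt (a+1) (by omega) (by omega)
      simpa using this
    · intro m hm ih h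
      have h1 : delta n s 2 a < delta n s 2 m := ih (by omega)
      have h2 := hstep_lt (m+1) (by omega) (by omega)
      simp only [add_sub_cancel_right] at h2
      linarith
  -- anti on [imax, n-1]
  have hanti : ∀ a : ℤ, imax ≤ a → ∀ b : ℤ, a + 1 ≤ b → b ≤ (n:ℤ) - 1 →
      delta n s 2 b < delta n s 2 a := by
    intro a ha b hb
    refine Int.le_induction
      (motive := fun b _ => b ≤ (n:ℤ) - 1 → delta n s 2 b < delta n s 2 a) ?_ ?_ b hb
    · intro h
      have := hstep_gt (a+1) (by omega) (by omega)
      simpa using this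
    · intro m hm ih h
      have h1 : delta n s 2 m < delta n s 2 a := ih (by omega)
      have h2 := hstep_gt (m+1) (by omega) (by omega)
      simp only [add_sub_cancel_right] at h2
      linarith
  refine ⟨heq, ?_, ?_, ?_⟩
  · intro a ha b hb hab
    exact hmono a ha.1 b (by omega) hb.2
  · intro a ha b hb hab
    exact hanti a ha.1 b (by omega) hb.2
  · intro i hi
    rcases lt_trichotomy i imax with h | h | h
    · rcases eq_or_lt_of_le (by omega : i ≤ imax - 1) with h' | h'
      · rw [h', heq]
      · rw [← heq]
        exact le_of_lt (hmono i hi.1 (imax - 1) (by omega) le_rfl)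
    · rw [h]
    · exact le_of_lt (hanti imax le_rfl i (by omega) hi.2)
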